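/- In classical propositional logic with variables and parameters, if A has a unifier τ (a substitution fixing parameters with ⊢ τ(A)), then A is projective: the substitution ε defined by ε(x) := (A ∧ x) ∨ (¬A ∧ τ(x)) for each variable x satisfies ⊢ ε(A) and A ⊢ ε(x) ↔ x for every variable x. -/

import Mathlib

inductive Form (var par : Type) : Type where
  | bot : Form var par
  | v : var → Form var par
  | p : par → Form var par
  | and : Form var par → Form var par → Form var par
  | or : Form var par → Form var par → Form var par
  | imp : Form var par → Form var par → Form var par

namespace Form
variable {var par : Type}

def neg (A : Form var par) : Form var par := A.imp .bot
def top : Form var par := Form.neg .bot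
def fiff (A B : Form var par) : Form var par := (A.imp B).and (B.imp A)

/-- `varFree A`: `A` contains no variables (it lies in the parameter-only sublanguage). -/
def varFree : Form var par → Prop
  | .bot => True
  | .v _ => False
  | .p _ => True
  | .and A B => varFree A ∧ varFree B
  | .or A B => varFree A ∧ varFree B
  | .imp A B => varFree A ∧ varFree B

/-- Substitutions act on variables, fix parameters, and commute with connectives. -/
def subst (θ : var → Form var par) : Form var par → Form var par
  | .bot => .bot
  | .v x => θ x
  | .p q => .p q
  | .and A B => (subst θ A).and (subst θ B)
  | .or A B => (subst θ A).or (subst θ B)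
  | .imp A B => (subst θ A).imp (subst θ B)

end Form

/-- Hilbert-style provability: `cl = false` is intuitionistic logic (IPC),
`cl = true` is classical logic (CPC). -/
inductive Prv {var par : Type} (cl : Bool) : Form var par → Prop where
  | mp {A B : Form var par} : Prv cl (A.imp B) → Prv cl A → Prv cl B
  | k {A B : Form var par} : Prv cl (A.imp (B.imp A))
  | s {A B C : Form var par} :
      Prv cl ((A.imp (B.imp C)).imp ((A.imp B).imp (A.imp C)))
  | andI {A B : Form var par} : Prv cl (A.imp (B.imp (A.and B)))
  | andE1 {A B : Form var par} : Prv cl ((A.and B).imp A)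
  | andE2 {A B : Form var par} : Prv cl ((A.and B).imp B)
  | orI1 {A B : Form var par} : Prv cl (A.imp (A.or B))
  | orI2 {A B : Form var par} : Prv cl (B.imp (A.or B))
  | orE {A B C : Form var par} :
      Prv cl ((A.imp C).imp ((B.imp C).imp ((A.or B).imp C)))
  | exf {A : Form var par} : Prv cl (Form.bot.imp A)
  | dne {A : Form var par} : cl = true → Prv cl (A.neg.neg.imp A)

/-- `U` is the uniform post-interpolant of `A` with respect to the parameters. -/
def IsUPI {var par : Type} (cl : Bool) (A U : Form var par) : Prop :=
  U.varFree ∧ Prv cl (A.imp U) ∧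
    ∀ C : Form var par, C.varFree → Prv cl (A.imp C) → Prv cl (U.imp C)

section Aux
variable {var par : Type}

private theorem prv_id {A : Form var par} : Prv true (A.imp A) :=
  Prv.mp (Prv.mp (Prv.s (B := A.imp A)) Prv.k) Prv.k

/-- Hilbert provability from a list of hypotheses. -/
private inductive Ded : List (Form var par) → Form var par → Prop where
  | hyp {Γ A} : A ∈ Γ → Ded Γ A
  | ax {Γ A} : Prv true A → Ded Γ A
  | mp {Γ A B} : Ded Γ (A.imp B) → Ded Γ A → Ded Γ B

private theorem Ded.weaken {Γ Γ' : List (Form var par)} {A : Form var par}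
    (h : Ded Γ A) (hs : ∀ B ∈ Γ, B ∈ Γ') : Ded Γ' A := by
  induction h with
  | hyp hm => exact .hyp (hs _ hm)
  | ax hp => exact .ax hp
  | mp _ _ ih1 ih2 => exact .mp ih1 ih2

private theorem Ded.wk {Γ : List (Form var par)} {A B : Form var par}
    (h : Ded Γ A) : Ded (B :: Γ) A :=
  h.weaken fun _ hm => List.mem_cons_of_mem _ hm

private theorem prv_of_ded {A : Form var par} (h : Ded [] A) : Prv true A := by
  generalize hΓ : ([] : List (Form var par)) = Γ at h
  induction h with
  | hyp hm => subst hΓ; simp at hm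
  | ax hp => exact hp
  | mp _ _ ih1 ih2 => exact Prv.mp ih1 ih2

private theorem Ded.impI' {Δ : List (Form var par)} {B : Form var par}
    (h : Ded Δ B) :
    ∀ (A : Form var par) (Γ : List (Form var par)),
      (∀ C ∈ Δ, C = A ∨ C ∈ Γ) → Ded Γ (A.imp B) := by
  induction h with
  | hyp hm =>
    intro A Γ hs
    rcases hs _ hm with rfl | hm'
    · exact .ax prv_id
    · exact .mp (.ax Prv.k) (.hyp hm')
  | ax hp => intro A Γ _; exact .mp (.ax Prv.k) (.ax hp)
  | mp _ _ ih1 ih2 =>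
    intro A Γ hs
    exact .mp (.mp (.ax Prv.s) (ih1 A Γ hs)) (ih2 A Γ hs)

private theorem Ded.impI {Γ : List (Form var par)} {A B : Form var par}
    (h : Ded (A :: Γ) B) : Ded Γ (A.imp B) :=
  h.impI' A Γ (by intro C hm; simpa using hm)

private theorem Ded.hyp0 {Γ : List (Form var par)} {A : Form var par} :
    Ded (A :: Γ) A := .hyp List.mem_cons_self

private theorem Ded.andI' {Γ : List (Form var par)} {A B : Form var par}
    (h1 : Ded Γ A) (h2 : Ded Γ B) : Ded Γ (A.and B) :=
  .mp (.mp (.ax Prv.andI) h1) h2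

private theorem Ded.andE1' {Γ : List (Form var par)} {A B : Form var par}
    (h : Ded Γ (A.and B)) : Ded Γ A := .mp (.ax Prv.andE1) h

private theorem Ded.andE2' {Γ : List (Form var par)} {A B : Form var par}
    (h : Ded Γ (A.and B)) : Ded Γ B := .mp (.ax Prv.andE2) h

private theorem Ded.orI1' {Γ : List (Form var par)} {A B : Form var par}
    (h : Ded Γ A) : Ded Γ (A.or B) := .mp (.ax Prv.orI1) h

private theorem Ded.orI2' {Γ : List (Form var par)} {A B : Form var par}
    (h : Ded Γ B) : Ded Γ (A.or B) := .mp (.ax Prv.orI2) h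

private theorem Ded.orE' {Γ : List (Form var par)} {A B C : Form var par}
    (h : Ded Γ (A.or B)) (h1 : Ded (A :: Γ) C) (h2 : Ded (B :: Γ) C) :
    Ded Γ C :=
  .mp (.mp (.mp (.ax Prv.orE) h1.impI) h2.impI) h

private theorem Ded.botE {Γ : List (Form var par)} {A : Form var par}
    (h : Ded Γ Form.bot) : Ded Γ A := .mp (.ax Prv.exf) h

private theorem Ded.dne' {Γ : List (Form var par)} {A : Form var par}
    (h : Ded Γ A.neg.neg) : Ded Γ A := .mp (.ax (Prv.dne rfl)) h

private theorem Ded.lem {Γ : List (Form var par)} {A : Form var par} :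
    Ded Γ (A.or A.neg) := by
  apply Ded.dne'
  apply Ded.impI
  have notA : Ded ((A.or A.neg).neg :: Γ) A.neg :=
    Ded.impI (.mp Ded.hyp0.wk (Ded.orI1' Ded.hyp0))
  exact .mp Ded.hyp0 (Ded.orI2' notA)

private theorem Ded.byCases {Γ : List (Form var par)} {A C : Form var par}
    (h1 : Ded (A :: Γ) C) (h2 : Ded (A.neg :: Γ) C) : Ded Γ C :=
  Ded.orE' Ded.lem h1 h2

private theorem Ded.iffI {Γ : List (Form var par)} {A B : Form var par}
    (h1 : Ded Γ (A.imp B)) (h2 : Ded Γ (B.imp A)) : Ded Γ (A.fiff B) :=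
  Ded.andI' h1 h2

private theorem Ded.iffE1 {Γ : List (Form var par)} {A B : Form var par}
    (h : Ded Γ (A.fiff B)) : Ded Γ (A.imp B) := Ded.andE1' h

private theorem Ded.iffE2 {Γ : List (Form var par)} {A B : Form var par}
    (h : Ded Γ (A.fiff B)) : Ded Γ (B.imp A) := Ded.andE2' h

private theorem Ded.iffRefl {Γ : List (Form var par)} {A : Form var par} :
    Ded Γ (A.fiff A) := Ded.iffI (Ded.impI Ded.hyp0) (Ded.impI Ded.hyp0)

private theorem Ded.congAnd {Γ : List (Form var par)} {A A' B B' : Form var par}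
    (h1 : Ded Γ (A.fiff A')) (h2 : Ded Γ (B.fiff B')) :
    Ded Γ ((A.and B).fiff (A'.and B')) := by
  apply Ded.iffI
  · exact Ded.impI (Ded.andI' (.mp h1.iffE1.wk (Ded.andE1' Ded.hyp0))
      (.mp h2.iffE1.wk (Ded.andE2' Ded.hyp0)))
  · exact Ded.impI (Ded.andI' (.mp h1.iffE2.wk (Ded.andE1' Ded.hyp0))
      (.mp h2.iffE2.wk (Ded.andE2' Ded.hyp0)))

private theorem Ded.congOr {Γ : List (Form var par)} {A A' B B' : Form var par}
    (h1 : Ded Γ (A.fiff A')) (h2 : Ded Γ (B.fiff B')) :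
    Ded Γ ((A.or B).fiff (A'.or B')) := by
  apply Ded.iffI
  · exact Ded.impI (Ded.orE' Ded.hyp0
      (Ded.orI1' (.mp h1.iffE1.wk.wk Ded.hyp0))
      (Ded.orI2' (.mp h2.iffE1.wk.wk Ded.hyp0)))
  · exact Ded.impI (Ded.orE' Ded.hyp0
      (Ded.orI1' (.mp h1.iffE2.wk.wk Ded.hyp0))
      (Ded.orI2' (.mp h2.iffE2.wk.wk Ded.hyp0)))

private theorem Ded.congImp {Γ : List (Form var par)} {A A' B B' : Form var par}
    (h1 : Ded Γ (A.fiff A')) (h2 : Ded Γ (B.fiff B')) :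
    Ded Γ ((A.imp B).fiff (A'.imp B')) := by
  apply Ded.iffI
  · exact Ded.impI (Ded.impI
      (.mp h2.iffE1.wk.wk (.mp Ded.hyp0.wk (.mp h1.iffE2.wk.wk Ded.hyp0))))
  · exact Ded.impI (Ded.impI
      (.mp h2.iffE2.wk.wk (.mp Ded.hyp0.wk (.mp h1.iffE1.wk.wk Ded.hyp0))))

private theorem key1 (A : Form var par) (τ : var → Form var par) :
    ∀ B : Form var par,
      Ded [A] ((Form.subst (fun x => ((A.and (Form.v x)).or (A.neg.and (τ x)))) B).fiff B) := by
  intro B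
  induction B with
  | bot => exact Ded.iffRefl
  | p q => exact Ded.iffRefl
  | v x =>
    apply Ded.iffI
    · apply Ded.impI
      apply Ded.orE' Ded.hyp0
      · exact Ded.andE2' Ded.hyp0
      · exact Ded.botE (.mp (Ded.andE1' Ded.hyp0) (Ded.hyp (by simp [Form.neg])))
    · exact Ded.impI (Ded.orI1' (Ded.andI' (Ded.hyp (by simp [Form.neg])) Ded.hyp0))
  | and B C ihB ihC => exact Ded.congAnd ihB ihC
  | or B C ihB ihC => exact Ded.congOr ihB ihC
  | imp B C ihB ihC => exact Ded.congImp ihB ihC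

private theorem key2 (A : Form var par) (τ : var → Form var par) :
    ∀ B : Form var par,
      Ded [A.neg]
        ((Form.subst (fun x => ((A.and (Form.v x)).or (A.neg.and (τ x)))) B).fiff
          (Form.subst τ B)) := by
  intro B
  induction B with
  | bot => exact Ded.iffRefl
  | p q => exact Ded.iffRefl
  | v x =>
    apply Ded.iffI
    · apply Ded.impI
      apply Ded.orE' Ded.hyp0
      · exact Ded.botE (.mp (Ded.hyp (by simp [Form.neg])) (Ded.andE1' Ded.hyp0))
      · exact Ded.andE2' Ded.hyp0
    · exact Ded.impI (Ded.orI2' (Ded.andI' (Ded.hyp (by simp [Form.neg])) Ded.hyp0))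
  | and B C ihB ihC => exact Ded.congAnd ihB ihC
  | or B C ihB ihC => exact Ded.congOr ihB ihC
  | imp B C ihB ihC => exact Ded.congImp ihB ihC

end Aux

/-- In classical logic, a unifiable formula is projective via
`ε(x) := (A ∧ x) ∨ (¬A ∧ τ(x))`. -/
theorem classical_unifiable_projective {var par : Type} (A : Form var par)
    (τ : var → Form var par) (h : Prv true (Form.subst τ A)) :
    Prv true (Form.subst (fun x => ((A.and (Form.v x)).or (A.neg.and (τ x)))) A) ∧
      ∀ x : var,
        Prv true (A.imp ((((A.and (Form.v x)).or (A.neg.and (τ x)))).fiff (Form.v x))) := by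
  constructor
  · apply prv_of_ded
    apply Ded.byCases (A := A)
    · exact .mp (key1 A τ A).iffE2 Ded.hyp0
    · exact .mp (key2 A τ A).iffE2 (.ax h)
  · intro x
    exact prv_of_ded (Ded.impI (key1 A τ (Form.v x)))
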